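/- Fix R > 0 and let μ, ν be non-zero non-negative finite Radon measures on the box B_R = [−R,R]^d. With d_{BL,R} the bounded Lipschitz distance and d_R(μ,ν) = |μ(B_R) − ν(B_R)| + d_{W,B_R}(μ/μ(B_R), ν/ν(B_R)), one has (μ(B_R) ∧ ν(B_R) + 1)^{-1} d_{BL,R}(μ,ν) ≤ d_R(μ,ν) ≤ d_{BL,R}(μ,ν) · (1 + 2((√d R) ∨ 1)/(μ(B_R) ∨ ν(B_R))). -/

import Mathlib

open MeasureTheory

noncomputable section

/-- The closed box `B_R = [−R,R]^d ⊆ ℝ^d`. -/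
def boxR (d : ℕ) (R : ℝ) : Set (EuclideanSpace ℝ (Fin d)) := {x | ∀ i, |x i| ≤ R}

/-- The 1-Wasserstein (Kantorovich–Rubinstein) distance on `B_R`:
`sup_{η ∈ Lip_1(B_R)} (∫ η dP − ∫ η dQ)`. -/
def dW (d : ℕ) (R : ℝ) (P Q : Measure (EuclideanSpace ℝ (Fin d))) : ℝ :=
  sSup {r : ℝ | ∃ η : EuclideanSpace ℝ (Fin d) → ℝ,
    LipschitzOnWith 1 η (boxR d R) ∧
    r = (∫ x in boxR d R, η x ∂P) - ∫ x in boxR d R, η x ∂Q}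

/-- The bounded Lipschitz distance on `B_R`:
`sup {∫ η dμ − ∫ η dν : η ∈ Lip_1(B_R), ‖η‖_∞ ≤ 1}`. -/
def dBL (d : ℕ) (R : ℝ) (μ ν : Measure (EuclideanSpace ℝ (Fin d))) : ℝ :=
  sSup {r : ℝ | ∃ η : EuclideanSpace ℝ (Fin d) → ℝ,
    LipschitzOnWith 1 η (boxR d R) ∧ (∀ x ∈ boxR d R, |η x| ≤ 1) ∧
    r = (∫ x in boxR d R, η x ∂μ) - ∫ x in boxR d R, η x ∂ν}

/-- The distance `d_R(μ,ν) = |μ(B_R) − ν(B_R)| + d_{W,B_R}(μ/μ(B_R), ν/ν(B_R))` for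
non-zero non-negative measures. -/
def dRdist (d : ℕ) (R : ℝ) (μ ν : Measure (EuclideanSpace ℝ (Fin d))) : ℝ :=
  |(μ (boxR d R)).toReal - (ν (boxR d R)).toReal|
    + dW d R ((μ (boxR d R))⁻¹ • μ) ((ν (boxR d R))⁻¹ • ν)

/-! ### Auxiliary lemmas -/

variable {d : ℕ} {R : ℝ}

lemma boxR_measurable : MeasurableSet (boxR d R) := by
  have : boxR d R = ⋂ i, {x : EuclideanSpace ℝ (Fin d) | |x i| ≤ R} := by
    ext x; simp [boxR, Set.mem_iInter]
  rw [this]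
  exact MeasurableSet.iInter fun i => measurableSet_le (by fun_prop) measurable_const

lemma zero_mem_boxR (hR : 0 ≤ R) : (0 : EuclideanSpace ℝ (Fin d)) ∈ boxR d R := by
  intro i; simp [hR]

lemma norm_le_of_mem_boxR (hR : 0 ≤ R) {x : EuclideanSpace ℝ (Fin d)}
    (hx : x ∈ boxR d R) : ‖x‖ ≤ Real.sqrt d * R := by
  rw [EuclideanSpace.norm_eq]
  have h1 : ∑ i, ‖x i‖ ^ 2 ≤ (d : ℝ) * R ^ 2 := by
    calc ∑ i, ‖x i‖ ^ 2 ≤ ∑ _i : Fin d, R ^ 2 := by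
          refine Finset.sum_le_sum fun i _ => ?_
          have h2 : ‖x i‖ ≤ R := by rw [Real.norm_eq_abs]; exact hx i
          exact pow_le_pow_left₀ (norm_nonneg _) h2 2
      _ = (d : ℝ) * R ^ 2 := by simp [Finset.sum_const, mul_comm]
  calc Real.sqrt (∑ i, ‖x i‖ ^ 2) ≤ Real.sqrt ((d : ℝ) * R ^ 2) := Real.sqrt_le_sqrt h1
    _ = Real.sqrt d * R := by
        rw [Real.sqrt_mul (Nat.cast_nonneg d), Real.sqrt_sq hR]

lemma lip_dist_le {η : EuclideanSpace ℝ (Fin d) → ℝ} (hη : LipschitzOnWith 1 η (boxR d R))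
    {x y : EuclideanSpace ℝ (Fin d)} (hx : x ∈ boxR d R) (hy : y ∈ boxR d R) :
    |η x - η y| ≤ ‖x - y‖ := by
  have := (lipschitzOnWith_iff_dist_le_mul.mp hη) x hx y hy
  simpa [Real.dist_eq, dist_eq_norm] using this

lemma lip_abs_sub_le (hR : 0 ≤ R) {η : EuclideanSpace ℝ (Fin d) → ℝ}
    (hη : LipschitzOnWith 1 η (boxR d R)) {x : EuclideanSpace ℝ (Fin d)}
    (hx : x ∈ boxR d R) : |η x - η 0| ≤ Real.sqrt d * R := by
  have h := lip_dist_le hη hx (zero_mem_boxR hR)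
  simpa using h.trans (by simpa using norm_le_of_mem_boxR hR hx)

lemma lip_integrableOn (hR : 0 ≤ R) (μ : Measure (EuclideanSpace ℝ (Fin d)))
    [IsFiniteMeasure μ] {η : EuclideanSpace ℝ (Fin d) → ℝ}
    (hη : LipschitzOnWith 1 η (boxR d R)) : IntegrableOn η (boxR d R) μ := by
  refine ⟨hη.continuousOn.aestronglyMeasurable boxR_measurable, ?_⟩
  apply HasFiniteIntegral.restrict_of_bounded (|η 0| + Real.sqrt d * R)
    (measure_lt_top μ _)
  filter_upwards [ae_restrict_mem boxR_measurable] with x hx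
  have h := lip_abs_sub_le hR hη hx
  have : |η x| ≤ |η 0| + |η x - η 0| := by
    have := abs_add_le (η 0) (η x - η 0); simpa using this
  rw [Real.norm_eq_abs]
  linarith

lemma abs_setIntegral_le {α : Type*} [MeasurableSpace α] (μ : Measure α) [IsFiniteMeasure μ]
    {s : Set α} {f : α → ℝ} {C : ℝ} (hf : AEStronglyMeasurable f (μ.restrict s))
    (h : ∀ x ∈ s, |f x| ≤ C) : |∫ x in s, f x ∂μ| ≤ C * (μ s).toReal := by
  have := norm_setIntegral_le_of_norm_le_const (f := f) (C := C) (measure_lt_top μ s)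
    (fun x hx => by simpa [Real.norm_eq_abs] using h x hx)
  simpa [Real.norm_eq_abs, Measure.real] using this

lemma lip_shift {η : EuclideanSpace ℝ (Fin d) → ℝ} (hη : LipschitzOnWith 1 η (boxR d R)) :
    LipschitzOnWith 1 (fun x => η x - η 0) (boxR d R) := by
  intro x hx y hy
  simpa [edist_sub_right] using hη hx hy

set_option maxHeartbeats 1600000 in
theorem dR_dBL_comparison (d : ℕ) (R : ℝ) (hR : 0 < R)
    (μ ν : Measure (EuclideanSpace ℝ (Fin d)))
    [IsFiniteMeasure μ] [IsFiniteMeasure ν]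
    (hμ : μ (boxR d R) ≠ 0) (hν : ν (boxR d R) ≠ 0) :
    (min (μ (boxR d R)).toReal (ν (boxR d R)).toReal + 1)⁻¹ * dBL d R μ ν
        ≤ dRdist d R μ ν
    ∧ dRdist d R μ ν
        ≤ dBL d R μ ν * (1 + 2 * max (Real.sqrt d * R) 1
            / max (μ (boxR d R)).toReal (ν (boxR d R)).toReal) := by
  have hR0 : (0:ℝ) ≤ R := hR.le
  set B := boxR d R with hBdef
  set m := (μ B).toReal with hmdef
  set n := (ν B).toReal with hndef
  have hm : 0 < m := ENNReal.toReal_pos hμ (measure_ne_top μ B)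
  have hn : 0 < n := ENNReal.toReal_pos hν (measure_ne_top ν B)
  set s := Real.sqrt d * R with hsdef
  have hs0 : 0 ≤ s := mul_nonneg (Real.sqrt_nonneg _) hR0
  set L := max s 1 with hLdef
  have hL1 : (1:ℝ) ≤ L := le_max_right _ _
  have hL0 : 0 < L := lt_of_lt_of_le one_pos hL1
  have hsL : s ≤ L := le_max_left _ _
  -- the two sup-sets
  set Wset := {r : ℝ | ∃ η : EuclideanSpace ℝ (Fin d) → ℝ,
    LipschitzOnWith 1 η B ∧
    r = (∫ x in B, η x ∂((μ B)⁻¹ • μ)) - ∫ x in B, η x ∂((ν B)⁻¹ • ν)} with hWdef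
  set Bset := {r : ℝ | ∃ η : EuclideanSpace ℝ (Fin d) → ℝ,
    LipschitzOnWith 1 η B ∧ (∀ x ∈ B, |η x| ≤ 1) ∧
    r = (∫ x in B, η x ∂μ) - ∫ x in B, η x ∂ν} with hBsdef
  have hdWeq : dW d R ((μ B)⁻¹ • μ) ((ν B)⁻¹ • ν) = sSup Wset := rfl
  have hdBLeq : dBL d R μ ν = sSup Bset := rfl
  -- normalized measures: integral identity
  have hPμ : ∀ f : EuclideanSpace ℝ (Fin d) → ℝ,
      ∫ x in B, f x ∂((μ B)⁻¹ • μ) = m⁻¹ * ∫ x in B, f x ∂μ := by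
    intro f
    rw [Measure.restrict_smul, integral_smul_measure, smul_eq_mul, ENNReal.toReal_inv]
  have hPν : ∀ f : EuclideanSpace ℝ (Fin d) → ℝ,
      ∫ x in B, f x ∂((ν B)⁻¹ • ν) = n⁻¹ * ∫ x in B, f x ∂ν := by
    intro f
    rw [Measure.restrict_smul, integral_smul_measure, smul_eq_mul, ENNReal.toReal_inv]
  -- shifted integral identity
  have hIshift : ∀ (ρ : Measure (EuclideanSpace ℝ (Fin d))) [IsFiniteMeasure ρ],
      ∀ ⦃η : EuclideanSpace ℝ (Fin d) → ℝ⦄, LipschitzOnWith 1 η B →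
      ∫ x in B, (η x - η 0) ∂ρ = (∫ x in B, η x ∂ρ) - (ρ B).toReal * η 0 := by
    intro ρ _ η hη
    rw [integral_sub (lip_integrableOn hR0 ρ hη)
      (integrableOn_const (measure_ne_top ρ B))]
    rw [setIntegral_const, smul_eq_mul, Measure.real]
  -- Bset facts
  have hBmem0 : (0:ℝ) ∈ Bset :=
    ⟨fun _ => 0, fun x _ y _ => by simp, fun x _ => by norm_num, by simp⟩
  have hBbd : ∀ r ∈ Bset, r ≤ m + n := by
    rintro r ⟨η, hη, hbd, rfl⟩
    have h1 : |∫ x in B, η x ∂μ| ≤ 1 * m :=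
      abs_setIntegral_le μ (hη.continuousOn.aestronglyMeasurable boxR_measurable) hbd
    have h2 : |∫ x in B, η x ∂ν| ≤ 1 * n :=
      abs_setIntegral_le ν (hη.continuousOn.aestronglyMeasurable boxR_measurable) hbd
    cases' abs_le.mp h1 with h1a h1b
    cases' abs_le.mp h2 with h2a h2b
    linarith
  have hBbdd : BddAbove Bset := ⟨m + n, fun r hr => hBbd r hr⟩
  have hD0 : 0 ≤ sSup Bset := le_csSup hBbdd hBmem0
  set D := sSup Bset with hDdef
  -- |m - n| ≤ D
  have habsmn : |m - n| ≤ D := by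
    have hmem1 : (m - n) ∈ Bset := by
      refine ⟨fun _ => 1, fun x _ y _ => by simp, fun x _ => by norm_num, ?_⟩
      rw [setIntegral_const, setIntegral_const, smul_eq_mul, smul_eq_mul, Measure.real, Measure.real, ← hmdef, ← hndef]
      ring
    have hmem2 : (n - m) ∈ Bset := by
      refine ⟨fun _ => -1, fun x _ y _ => by simp, fun x _ => by norm_num, ?_⟩
      rw [setIntegral_const, setIntegral_const, smul_eq_mul, smul_eq_mul, Measure.real, Measure.real, ← hmdef, ← hndef]
      ring
    exact abs_sub_le_iff.mpr ⟨le_csSup hBbdd hmem1, le_csSup hBbdd hmem2⟩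
  -- Wset element structure
  have hWelem : ∀ r ∈ Wset, ∃ a b : ℝ,
      r = m⁻¹ * a - n⁻¹ * b ∧ |a| ≤ s * m ∧ |b| ≤ s * n ∧ a - b ≤ L * D := by
    rintro r ⟨η, hη, rfl⟩
    set a := ∫ x in B, (η x - η 0) ∂μ with hadef
    set b := ∫ x in B, (η x - η 0) ∂ν with hbdef
    have hηs := lip_shift hη
    have hmeasμ : AEStronglyMeasurable (fun x => η x - η 0) (μ.restrict B) :=
      hηs.continuousOn.aestronglyMeasurable boxR_measurable
    have hmeasν : AEStronglyMeasurable (fun x => η x - η 0) (ν.restrict B) :=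
      hηs.continuousOn.aestronglyMeasurable boxR_measurable
    have hvals : ∀ x ∈ B, |η x - η 0| ≤ s := fun x hx => lip_abs_sub_le hR0 hη hx
    have ha : |a| ≤ s * m := abs_setIntegral_le μ hmeasμ hvals
    have hb : |b| ≤ s * n := abs_setIntegral_le ν hmeasν hvals
    refine ⟨a, b, ?_, ha, hb, ?_⟩
    · rw [hPμ, hPν, hadef, hbdef, hIshift μ hη, hIshift ν hη, ← hmdef, ← hndef]
      have e : m⁻¹ * ((∫ x in B, η x ∂μ) - m * η 0) - n⁻¹ * ((∫ x in B, η x ∂ν) - n * η 0)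
          = m⁻¹ * (∫ x in B, η x ∂μ) - n⁻¹ * (∫ x in B, η x ∂ν)
            - (m⁻¹ * m) * η 0 + (n⁻¹ * n) * η 0 := by ring
      rw [e, inv_mul_cancel₀ hm.ne', inv_mul_cancel₀ hn.ne']
      ring
    · -- a - b ≤ L * D using the test function L⁻¹ • (η - η 0)
      set ζ : EuclideanSpace ℝ (Fin d) → ℝ := fun x => L⁻¹ * (η x - η 0) with hζdef
      have hζlip : LipschitzOnWith 1 ζ B := by
        rw [lipschitzOnWith_iff_dist_le_mul]
        intro x hx y hy
        have h1 : dist (ζ x) (ζ y) = L⁻¹ * |(η x - η 0) - (η y - η 0)| := by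
          rw [Real.dist_eq, hζdef]
          rw [← mul_sub, abs_mul, abs_of_pos (inv_pos.mpr hL0)]
        have h2 : |(η x - η 0) - (η y - η 0)| ≤ dist x y := by
          have := lip_dist_le hη hx hy
          simpa [dist_eq_norm] using this
        have h3 : L⁻¹ ≤ 1 := inv_le_one_of_one_le₀ hL1
        have hfin : dist (ζ x) (ζ y) ≤ 1 * dist x y := by
          rw [h1]
          exact mul_le_mul h3 h2 (abs_nonneg _) zero_le_one
        simpa using hfin
      have hζbd : ∀ x ∈ B, |ζ x| ≤ 1 := by
        intro x hx
        rw [hζdef, abs_mul, abs_of_pos (inv_pos.mpr hL0)]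
        calc L⁻¹ * |η x - η 0| ≤ L⁻¹ * L := by
              apply mul_le_mul_of_nonneg_left ((hvals x hx).trans hsL)
                (inv_nonneg.mpr hL0.le)
          _ = 1 := inv_mul_cancel₀ hL0.ne'
      have hζmem : (L⁻¹ * a - L⁻¹ * b) ∈ Bset := by
        refine ⟨ζ, hζlip, hζbd, ?_⟩
        rw [hζdef, hadef, hbdef]
        rw [integral_const_mul, integral_const_mul]
      have hle : L⁻¹ * a - L⁻¹ * b ≤ D := le_csSup hBbdd hζmem
      have hmul := mul_le_mul_of_nonneg_left hle hL0.le
      have e : L * (L⁻¹ * a - L⁻¹ * b) = (L * L⁻¹) * a - (L * L⁻¹) * b := by ring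
      calc a - b = L * (L⁻¹ * a - L⁻¹ * b) := by
            rw [e, mul_inv_cancel₀ hL0.ne', one_mul, one_mul]
        _ ≤ L * D := hmul
  have hWmem0 : (0:ℝ) ∈ Wset := ⟨fun _ => 0, fun x _ y _ => by simp, by simp⟩
  have hWbdd : BddAbove Wset := by
    refine ⟨2 * s, fun r hr => ?_⟩
    obtain ⟨a, b, hrab, ha, hb, -⟩ := hWelem r hr
    have h1 : m⁻¹ * a ≤ s := by
      calc m⁻¹ * a ≤ m⁻¹ * (s * m) := by
            apply mul_le_mul_of_nonneg_left ((le_abs_self a).trans ha)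
              (inv_nonneg.mpr hm.le)
        _ = m⁻¹ * m * s := by ring
        _ = s := by rw [inv_mul_cancel₀ hm.ne', one_mul]
    have h2 : -(n⁻¹ * b) ≤ s := by
      calc -(n⁻¹ * b) = n⁻¹ * (-b) := by ring
        _ ≤ n⁻¹ * (s * n) := by
            apply mul_le_mul_of_nonneg_left ((neg_le_abs b).trans hb)
              (inv_nonneg.mpr hn.le)
        _ = n⁻¹ * n * s := by ring
        _ = s := by rw [inv_mul_cancel₀ hn.ne', one_mul]
    rw [hrab]; linarith
  have hdW0 : 0 ≤ sSup Wset := le_csSup hWbdd hWmem0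
  set E := sSup Wset with hEdef
  -- Part 2 key : E ≤ 2 * L * D / max m n
  have hE_le : E ≤ 2 * L * D / max m n := by
    apply Real.sSup_le
    · rintro r hr
      obtain ⟨a, b, hrab, ha, hb, hab⟩ := hWelem r hr
      have haLm : a ≤ L * m := (le_abs_self a).trans (ha.trans
        (mul_le_mul_of_nonneg_right hsL hm.le))
      have hbLn : -b ≤ L * n := (neg_le_abs b).trans (hb.trans
        (mul_le_mul_of_nonneg_right hsL hn.le))
      have hrval : r = (n * a - m * b) / (m * n) := by
        rw [hrab, eq_div_iff (by positivity)]
        have e : (m⁻¹ * a - n⁻¹ * b) * (m * n) = (m⁻¹ * m) * (n * a) - (n⁻¹ * n) * (m * b) := by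
          ring
        rw [e, inv_mul_cancel₀ hm.ne', inv_mul_cancel₀ hn.ne']
        ring
      rcases le_total m n with hmn | hnm
      · have hmax : max m n = n := max_eq_right hmn
        have hkey : n * a - m * b ≤ 2 * L * D * m := by
          have e1 : n * a - m * b = m * (a - b) + (n - m) * a := by ring
          have e2 : m * (a - b) ≤ m * (L * D) := mul_le_mul_of_nonneg_left hab hm.le
          have e3 : (n - m) * a ≤ (n - m) * (L * m) :=
            mul_le_mul_of_nonneg_left haLm (sub_nonneg.mpr hmn)
          have e4 : (n - m) * (L * m) ≤ D * (L * m) := by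
            apply mul_le_mul_of_nonneg_right _ (mul_nonneg hL0.le hm.le)
            calc n - m ≤ |m - n| := by rw [abs_sub_comm]; exact le_abs_self _
              _ ≤ D := habsmn
          linarith [e1, e2, e3, e4]
        rw [hrval, hmax]
        calc (n * a - m * b) / (m * n) ≤ (2 * L * D * m) / (m * n) :=
              div_le_div_of_nonneg_right hkey (by positivity)
          _ = 2 * L * D / n := by
              rw [mul_comm m n, mul_div_mul_right _ _ hm.ne']
      · have hmax : max m n = m := max_eq_left hnm
        have hkey : n * a - m * b ≤ 2 * L * D * n := by
          have e1 : n * a - m * b = n * (a - b) + (m - n) * (-b) := by ring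
          have e2 : n * (a - b) ≤ n * (L * D) := mul_le_mul_of_nonneg_left hab hn.le
          have e3 : (m - n) * (-b) ≤ (m - n) * (L * n) :=
            mul_le_mul_of_nonneg_left hbLn (sub_nonneg.mpr hnm)
          have e4 : (m - n) * (L * n) ≤ D * (L * n) := by
            apply mul_le_mul_of_nonneg_right _ (mul_nonneg hL0.le hn.le)
            calc m - n ≤ |m - n| := le_abs_self _
              _ ≤ D := habsmn
          linarith [e1, e2, e3, e4]
        rw [hrval, hmax]
        calc (n * a - m * b) / (m * n) ≤ (2 * L * D * n) / (m * n) :=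
              div_le_div_of_nonneg_right hkey (by positivity)
          _ = 2 * L * D / m := by
              rw [mul_div_assoc, mul_comm m n, ← div_div, div_self hn.ne', mul_div_assoc,
                one_div, div_eq_mul_inv]
              ring
    · positivity
  -- Part 1 key : D ≤ (min m n + 1) * (|m - n| + E)
  have hD_le : D ≤ (min m n + 1) * (|m - n| + E) := by
    apply Real.sSup_le
    · rintro r ⟨η, hη, hbd, rfl⟩
      set p := ∫ x in B, η x ∂μ with hpdef
      set q := ∫ x in B, η x ∂ν with hqdef
      have hp : |p| ≤ 1 * m :=
        abs_setIntegral_le μ (hη.continuousOn.aestronglyMeasurable boxR_measurable) hbd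
      have hq : |q| ≤ 1 * n :=
        abs_setIntegral_le ν (hη.continuousOn.aestronglyMeasurable boxR_measurable) hbd
      rw [one_mul] at hp hq
      have heE : m⁻¹ * p - n⁻¹ * q ≤ E := by
        apply le_csSup hWbdd
        exact ⟨η, hη, by rw [hPμ, hPν, ← hpdef, ← hqdef]⟩
      rcases le_total m n with hmn | hnm
      · have hmin : min m n = m := min_eq_left hmn
        have hkey : (p - q) * n ≤ (m * E + (n - m)) * n := by
          have e1 : (p - q) * n = m * n * (m⁻¹ * p - n⁻¹ * q) + (m - n) * q := by
            have e : m * n * (m⁻¹ * p - n⁻¹ * q)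
                = (m * m⁻¹) * (n * p) - (n * n⁻¹) * (m * q) := by ring
            rw [e, mul_inv_cancel₀ hm.ne', mul_inv_cancel₀ hn.ne']; ring
          have e2 : m * n * (m⁻¹ * p - n⁻¹ * q) ≤ m * n * E :=
            mul_le_mul_of_nonneg_left heE (by positivity)
          have e3 : (m - n) * q ≤ (m - n) * (-n) := by
            apply mul_le_mul_of_nonpos_left _ (sub_nonpos.mpr hmn)
            exact neg_le_of_abs_le hq
          linarith [e1, e2, e3]
        have hpq : p - q ≤ m * E + (n - m) := le_of_mul_le_mul_right hkey hn
        have habs : n - m ≤ |m - n| := by rw [abs_sub_comm]; exact le_abs_self _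
        rw [hmin]
        linarith [hpq, habs, hdW0, mul_nonneg hm.le (abs_nonneg (m - n))]
      · have hmin : min m n = n := min_eq_right hnm
        have hkey : (p - q) * m ≤ (n * E + (m - n)) * m := by
          have e1 : (p - q) * m = m * n * (m⁻¹ * p - n⁻¹ * q) + (m - n) * p := by
            have e : m * n * (m⁻¹ * p - n⁻¹ * q)
                = (m * m⁻¹) * (n * p) - (n * n⁻¹) * (m * q) := by ring
            rw [e, mul_inv_cancel₀ hm.ne', mul_inv_cancel₀ hn.ne']; ring
          have e2 : m * n * (m⁻¹ * p - n⁻¹ * q) ≤ m * n * E :=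
            mul_le_mul_of_nonneg_left heE (by positivity)
          have e3 : (m - n) * p ≤ (m - n) * m := by
            apply mul_le_mul_of_nonneg_left _ (sub_nonneg.mpr hnm)
            exact (le_abs_self p).trans hp
          linarith [e1, e2, e3]
        have hpq : p - q ≤ n * E + (m - n) := le_of_mul_le_mul_right hkey hm
        have habs : m - n ≤ |m - n| := le_abs_self _
        rw [hmin]
        linarith [hpq, habs, hdW0, mul_nonneg hn.le (abs_nonneg (m - n))]
    · positivity
  -- conclude
  have hdRval : dRdist d R μ ν = |m - n| + E := rfl
  constructor
  · rw [hdRval, inv_mul_le_iff₀ (by positivity)]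
    exact hD_le
  · rw [hdRval]
    have h2L : 2 * L * D / max m n = D * (2 * L / max m n) := by ring
    have : |m - n| + E ≤ D + 2 * L * D / max m n := by linarith [hE_le, habsmn]
    calc |m - n| + E ≤ D + 2 * L * D / max m n := this
      _ = D * (1 + 2 * L / max m n) := by ring
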